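/- For every A ∈ ℝ^{m×n} there exists a unique partition B ∪ N = {1,…,m}, B ∩ N = ∅, such that: (i) there exists x̂ ∈ ℝⁿ with A_B x̂ = 0 and A_N x̂ < 0 componentwise, and (ii) there exists ŷ_B > 0 componentwise with A_Bᵀ ŷ_B = 0. -/

import Mathlib

open Matrix Finset

/-- Algebraic Farkas lemma, proved by induction on the number of generators. -/
private lemma farkas_aux {n : ℕ} :
    ∀ (m : ℕ) (a : Fin m → Fin n → ℝ) (b : Fin n → ℝ),
      (∃ c : Fin m → ℝ, (∀ i, 0 ≤ c i) ∧ ∑ i, c i • a i = b) ∨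
      (∃ x : Fin n → ℝ, (∀ i, a i ⬝ᵥ x ≤ 0) ∧ 0 < b ⬝ᵥ x) := by
  intro m
  induction m with
  | zero =>
    intro a b
    by_cases hb : b = 0
    · exact Or.inl ⟨0, fun i => le_rfl, by simp [hb]⟩
    · refine Or.inr ⟨b, fun i => i.elim0, ?_⟩
      have : b ⬝ᵥ b ≠ 0 := fun h => hb ((dotProduct_self_eq_zero).mp h)
      have h2 : 0 ≤ b ⬝ᵥ b := Finset.sum_nonneg fun j _ => mul_self_nonneg _
      exact lt_of_le_of_ne h2 (Ne.symm this)
  | succ m ih =>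
    intro a b
    rcases ih (fun i => a i.castSucc) b with ⟨c, hc, hsum⟩ | ⟨x, hx, hbx⟩
    · refine Or.inl ⟨Fin.snoc c 0, ?_, ?_⟩
      · intro i
        refine Fin.lastCases ?_ ?_ i
        · simp
        · intro j; simpa using hc j
      · rw [Fin.sum_univ_castSucc]
        simp only [Fin.snoc_castSucc, Fin.snoc_last, zero_smul, add_zero]
        exact hsum
    · by_cases hlast : a (Fin.last m) ⬝ᵥ x ≤ 0
      · exact Or.inr ⟨x, Fin.lastCases hlast hx, hbx⟩
      · push_neg at hlast
        set α := a (Fin.last m) ⬝ᵥ x with hα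
        have hα0 : α ≠ 0 := ne_of_gt hlast
        set aL := a (Fin.last m) with haL
        rcases ih (fun i => a i.castSucc - (a i.castSucc ⬝ᵥ x / α) • aL)
            (b - (b ⬝ᵥ x / α) • aL) with ⟨c, hc, hsum⟩ | ⟨z, hz, hbz⟩
        · -- b is in the cone
          set μ : ℝ := b ⬝ᵥ x / α - (∑ i, c i * (a i.castSucc ⬝ᵥ x)) / α with hμ
          have hμ0 : 0 ≤ μ := by
            rw [hμ]
            have h1 : (∑ i, c i * (a i.castSucc ⬝ᵥ x)) ≤ 0 :=
              Finset.sum_nonpos fun i _ => mul_nonpos_of_nonneg_of_nonpos (hc i) (hx i)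
            have : 0 < b ⬝ᵥ x / α := div_pos hbx hlast
            have h2 : (∑ i, c i * (a i.castSucc ⬝ᵥ x)) / α ≤ 0 :=
              div_nonpos_of_nonpos_of_nonneg h1 (le_of_lt hlast)
            linarith
          refine Or.inl ⟨Fin.snoc c μ, ?_, ?_⟩
          · intro i
            refine Fin.lastCases ?_ ?_ i
            · simpa using hμ0
            · intro j; simpa using hc j
          · rw [Fin.sum_univ_castSucc]
            simp only [Fin.snoc_castSucc, Fin.snoc_last]
            have hexp : ∑ i, c i • (a i.castSucc - (a i.castSucc ⬝ᵥ x / α) • aL)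
                = (∑ i, c i • a i.castSucc)
                  - ((∑ i, c i * (a i.castSucc ⬝ᵥ x)) / α) • aL := by
              simp only [smul_sub, smul_smul]
              rw [Finset.sum_sub_distrib, ← Finset.sum_smul]
              have hsc : ∑ i, c i * (a i.castSucc ⬝ᵥ x / α)
                  = (∑ i, c i * (a i.castSucc ⬝ᵥ x)) / α := by
                rw [Finset.sum_div]
                exact Finset.sum_congr rfl fun i _ => by ring
              rw [hsc]
            rw [hexp] at hsum
            have : (∑ i, c i • a i.castSucc)
                = b - (b ⬝ᵥ x / α) • aL + ((∑ i, c i * (a i.castSucc ⬝ᵥ x)) / α) • aL := by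
              rw [← hsum]; abel
            rw [this, hμ, sub_smul]
            abel
        · -- separating hyperplane
          refine Or.inr ⟨z - (aL ⬝ᵥ z / α) • x, ?_, ?_⟩
          · intro i
            refine Fin.lastCases ?_ ?_ i
            · rw [dotProduct_sub, dotProduct_smul, smul_eq_mul, ← haL, ← hα]
              field_simp
              simp
            · intro j
              have := hz j
              rw [sub_dotProduct, smul_dotProduct, smul_eq_mul] at this
              rw [dotProduct_sub, dotProduct_smul, smul_eq_mul]
              have heq : aL ⬝ᵥ z / α * (a j.castSucc ⬝ᵥ x)
                  = a j.castSucc ⬝ᵥ x / α * (aL ⬝ᵥ z) := by field_simp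
              linarith [this, heq.le, heq.ge]
          · have := hbz
            rw [sub_dotProduct, smul_dotProduct, smul_eq_mul] at this
            rw [dotProduct_sub, dotProduct_smul, smul_eq_mul]
            have heq : aL ⬝ᵥ z / α * (b ⬝ᵥ x) = b ⬝ᵥ x / α * (aL ⬝ᵥ z) := by
              field_simp
            linarith [this, heq.le, heq.ge]

/-- Transpose-mulVec as a combination of rows. -/
private lemma transpose_mulVec_eq_sum {m n : ℕ} (A : Matrix (Fin m) (Fin n) ℝ)
    (y : Fin m → ℝ) : A.transpose.mulVec y = ∑ j, y j • A j := by
  funext k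
  simp [Matrix.mulVec, dotProduct, Matrix.transpose, Finset.sum_apply, mul_comm]

/-- Complementarity key lemma. -/
private lemma key_lemma {m n : ℕ} (A : Matrix (Fin m) (Fin n) ℝ)
    (y u : _) (hy : ∀ j, 0 ≤ y j) (hAy : A.transpose.mulVec y = 0)
    (hu : ∀ j, A.mulVec u j ≤ 0) : ∀ k, y k * A.mulVec u k = 0 := by
  have h0 : ∑ k, y k * A.mulVec u k = 0 := by
    have : y ⬝ᵥ (A.mulVec u) = (A.transpose.mulVec y) ⬝ᵥ u := by
      rw [dotProduct_mulVec, mulVec_transpose]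
    simpa [dotProduct, hAy] using this
  intro k
  have := (Finset.sum_eq_zero_iff_of_nonpos
    (fun j (_ : j ∈ Finset.univ) => mul_nonpos_of_nonneg_of_nonpos (hy j) (hu j))).mp h0
  exact this k (Finset.mem_univ k)

/-- The alternative: for each row index, exactly one of the primal/dual conditions holds
(we only need "at least one" here). -/
private lemma alternative {m n : ℕ} (A : Matrix (Fin m) (Fin n) ℝ) (i : Fin m) :
    (∃ y : Fin m → ℝ, (∀ j, 0 ≤ y j) ∧ 0 < y i ∧ A.transpose.mulVec y = 0) ∨
    (∃ x : Fin n → ℝ, (∀ j, A.mulVec x j ≤ 0) ∧ A.mulVec x i < 0) := by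
  rcases farkas_aux m (fun j => A j) (-(A i)) with ⟨c, hc, hsum⟩ | ⟨x, hx, hbx⟩
  · refine Or.inl ⟨fun j => c j + if j = i then 1 else 0, ?_, ?_, ?_⟩
    · intro j
      dsimp only
      split <;> linarith [hc j]
    · have h1 : (if i = i then (1:ℝ) else 0) = 1 := if_pos rfl
      dsimp only
      rw [h1]
      linarith [hc i]
    · rw [transpose_mulVec_eq_sum]
      have : ∑ j, (c j + if j = i then (1:ℝ) else 0) • A j
          = (∑ j, c j • A j) + ∑ j, (if j = i then (1:ℝ) else 0) • A j := by
        rw [← Finset.sum_add_distrib]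
        congr 1; funext j; rw [add_smul]
      rw [this, hsum]
      have h2 : ∑ j, (if j = i then (1:ℝ) else 0) • A j = A i := by
        rw [Finset.sum_eq_single i]
        · simp
        · intro b _ hb; simp [hb]
        · intro h; exact absurd (Finset.mem_univ i) h
      rw [h2]; abel
  · refine Or.inr ⟨x, fun j => hx j, ?_⟩
    have : A.mulVec x i = A i ⬝ᵥ x := rfl
    rw [this]
    rw [neg_dotProduct] at hbx
    linarith

/-- Goldman–Tucker partition: there is a unique partition `B ∪ N = {1,…,m}` with
`A_B xhat = 0, A_N xhat < 0` for some `xhat`, and `A_Bᵀ yhat_B = 0` for some `yhat_B > 0`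
(encoded as a vector `yhat` positive on `B` and vanishing off `B`). -/
theorem stmt10 {m n : ℕ} (A : Matrix (Fin m) (Fin n) ℝ) :
    ∃! p : Finset (Fin m) × Finset (Fin m),
      p.1 ∪ p.2 = Finset.univ ∧ p.1 ∩ p.2 = ∅ ∧
      (∃ xhat : Fin n → ℝ, (∀ i ∈ p.1, A.mulVec xhat i = 0) ∧ (∀ i ∈ p.2, A.mulVec xhat i < 0)) ∧
      (∃ yhat : Fin m → ℝ, (∀ i ∈ p.1, 0 < yhat i) ∧ (∀ i ∉ p.1, yhat i = 0) ∧
        A.transpose.mulVec yhat = 0) := by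
  classical
  set B : Finset (Fin m) := Finset.univ.filter
    (fun i => ∃ y : Fin m → ℝ, (∀ j, 0 ≤ y j) ∧ 0 < y i ∧ A.transpose.mulVec y = 0) with hB
  have memB : ∀ i, i ∈ B ↔
      ∃ y : Fin m → ℝ, (∀ j, 0 ≤ y j) ∧ 0 < y i ∧ A.transpose.mulVec y = 0 := by
    intro i; simp [hB]
  -- choose primal vectors
  have hPx : ∀ i : Fin m, ∃ x : Fin n → ℝ,
      (∀ j, A.mulVec x j ≤ 0) ∧ (i ∉ B → A.mulVec x i < 0) := by
    intro i
    by_cases hi : i ∈ B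
    · exact ⟨0, by simp [Matrix.mulVec_zero], fun h => absurd hi h⟩
    · rcases alternative A i with hD | ⟨x, hx1, hx2⟩
      · exact absurd ((memB i).mpr hD) hi
      · exact ⟨x, hx1, fun _ => hx2⟩
  choose X hX1 hX2 using hPx
  set xhat : Fin n → ℝ := ∑ i, X i with hxhat
  have hAxhat : ∀ j, A.mulVec xhat j = ∑ i, A.mulVec (X i) j := by
    intro j
    rw [hxhat]
    have : A.mulVec (∑ i, X i) = ∑ i, A.mulVec (X i) := by
      have h := map_sum A.mulVecLin X Finset.univ
      simpa only [Matrix.mulVecLin_apply] using h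
    rw [this, Finset.sum_apply]
  have hxle : ∀ j, A.mulVec xhat j ≤ 0 := by
    intro j; rw [hAxhat]
    exact Finset.sum_nonpos fun i _ => hX1 i j
  have hxN : ∀ j, j ∉ B → A.mulVec xhat j < 0 := by
    intro j hj
    rw [hAxhat]
    calc ∑ i, A.mulVec (X i) j < ∑ _i : Fin m, (0:ℝ) := by
          refine Finset.sum_lt_sum (fun i _ => hX1 i j) ⟨j, Finset.mem_univ j, hX2 j hj⟩
      _ = 0 := by simp
  have hxB : ∀ j, j ∈ B → A.mulVec xhat j = 0 := by
    intro j hj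
    obtain ⟨y, hy1, hy2, hy3⟩ := (memB j).mp hj
    have := key_lemma A y xhat hy1 hy3 hxle j
    rcases mul_eq_zero.mp this with h | h
    · exact absurd h (ne_of_gt hy2)
    · exact h
  -- choose dual vectors
  have hPy : ∀ i : Fin m, ∃ y : Fin m → ℝ,
      (∀ j, 0 ≤ y j) ∧ A.transpose.mulVec y = 0 ∧ (i ∈ B → 0 < y i) := by
    intro i
    by_cases hi : i ∈ B
    · obtain ⟨y, hy1, hy2, hy3⟩ := (memB i).mp hi
      exact ⟨y, hy1, hy3, fun _ => hy2⟩
    · exact ⟨0, fun j => le_rfl, by simp [Matrix.mulVec_zero], fun h => absurd h hi⟩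
  choose Y hY1 hY2 hY3 using hPy
  have hYclosed : ∀ i k, k ∉ B → Y i k = 0 := by
    intro i k hk
    by_contra h
    have hpos : 0 < Y i k := lt_of_le_of_ne (hY1 i k) (Ne.symm h)
    exact hk ((memB k).mpr ⟨Y i, hY1 i, hpos, hY2 i⟩)
  set yhat : Fin m → ℝ := ∑ i ∈ B, Y i with hyhat
  have hyhatk : ∀ k, yhat k = ∑ i ∈ B, Y i k := by
    intro k; rw [hyhat, Finset.sum_apply]
  have hyB : ∀ k ∈ B, 0 < yhat k := by
    intro k hk
    rw [hyhatk]
    exact Finset.sum_pos' (fun i _ => hY1 i k) ⟨k, hk, hY3 k hk⟩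
  have hyN : ∀ k, k ∉ B → yhat k = 0 := by
    intro k hk
    rw [hyhatk]
    exact Finset.sum_eq_zero fun i _ => hYclosed i k hk
  have hyA : A.transpose.mulVec yhat = 0 := by
    rw [hyhat]
    have : A.transpose.mulVec (∑ i ∈ B, Y i) = ∑ i ∈ B, A.transpose.mulVec (Y i) := by
      have h := map_sum A.transpose.mulVecLin Y B
      simpa only [Matrix.mulVecLin_apply] using h
    rw [this]
    exact Finset.sum_eq_zero fun i _ => hY2 i
  refine ⟨(B, Bᶜ), ⟨Finset.union_compl B, Finset.inter_compl B,
    ⟨xhat, fun i hi => hxB i hi, fun i hi => hxN i (Finset.mem_compl.mp hi)⟩,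
    ⟨yhat, fun i hi => hyB i hi, fun i hi => hyN i hi, hyA⟩⟩, ?_⟩
  rintro ⟨B', N'⟩ ⟨hu, hi, ⟨x', hx'1, hx'2⟩, ⟨y', hy'1, hy'2, hy'3⟩⟩
  have hN' : N' = B'ᶜ := by
    ext k
    simp only [Finset.mem_compl]
    constructor
    · intro hk hk'
      have : k ∈ B' ∩ N' := Finset.mem_inter.mpr ⟨hk', hk⟩
      rw [hi] at this
      exact absurd this (Finset.notMem_empty k)
    · intro hk
      have : k ∈ B' ∪ N' := by rw [hu]; exact Finset.mem_univ k
      rcases Finset.mem_union.mp this with h | h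
      · exact absurd h hk
      · exact h
  have hB'B : B' = B := by
    apply Finset.Subset.antisymm
    · intro i hi'
      refine (memB i).mpr ⟨y', ?_, hy'1 i hi', hy'3⟩
      intro j
      by_cases hj : j ∈ B'
      · exact le_of_lt (hy'1 j hj)
      · exact le_of_eq (hy'2 j hj).symm
    · intro i hi'
      by_contra hcon
      have hiN' : i ∈ N' := by
        rw [hN', Finset.mem_compl]; exact hcon
      obtain ⟨y, hy1, hy2, hy3⟩ := (memB i).mp hi'
      have hxle' : ∀ j, A.mulVec x' j ≤ 0 := by
        intro j
        have : j ∈ B' ∪ N' := by rw [hu]; exact Finset.mem_univ j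
        rcases Finset.mem_union.mp this with h | h
        · exact le_of_eq (hx'1 j h)
        · exact le_of_lt (hx'2 j h)
      have := key_lemma A y x' hy1 hy3 hxle' i
      have hlt : y i * A.mulVec x' i < 0 :=
        mul_neg_of_pos_of_neg hy2 (hx'2 i hiN')
      linarith
  rw [hB'B] at hN' ⊢
  rw [hN']
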